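/- In the hyperbolic plane of curvature -1, consider geodesic triangles with vertex angle θ between two sides of lengths a and b, and opposite side of length c. If a, b, c → ∞ in such a way that a + b - c → 2s for some s ≥ 0 (and θ is determined by the law of cosines cosh c = cosh a cosh b - sinh a sinh b cos θ), then cos θ → 1 - 2e^{-2s}; equivalently sin(θ_∞/2) = e^{-s} where θ_∞ is the limiting angle. -/

import Mathlib

open Set Filter Topology

private lemma expand_num (x y z : ℝ) :
    (Real.cosh x * Real.cosh y - Real.cosh z) * Real.exp (-(x + y)) =
      (1 + Real.exp (-(2*x)) + Real.exp (-(2*y)) + Real.exp (-(2*x)) * Real.exp (-(2*y))) / 4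
        - (Real.exp (z - x - y) + Real.exp (-(z + x + y))) / 2 := by
  rw [Real.cosh_eq, Real.cosh_eq, Real.cosh_eq,
    show -(2*x) = -x + -x by ring, show -(2*y) = -y + -y by ring,
    show z - x - y = z + (-x + -y) by ring, show -(z + x + y) = -z + (-x + -y) by ring,
    show -(x + y) = -x + -y by ring]
  simp only [Real.exp_add, Real.exp_neg]
  have hx := Real.exp_ne_zero x
  have hy := Real.exp_ne_zero y
  have hz := Real.exp_ne_zero z
  field_simp
  ring

private lemma expand_den (x y : ℝ) :
    (Real.sinh x * Real.sinh y) * Real.exp (-(x + y)) =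
      (1 - Real.exp (-(2*x)) - Real.exp (-(2*y)) + Real.exp (-(2*x)) * Real.exp (-(2*y))) / 4 := by
  rw [Real.sinh_eq, Real.sinh_eq,
    show -(2*x) = -x + -x by ring, show -(2*y) = -y + -y by ring,
    show -(x + y) = -x + -y by ring]
  simp only [Real.exp_add, Real.exp_neg]
  have hx := Real.exp_ne_zero x
  have hy := Real.exp_ne_zero y
  field_simp
  ring

/-- in the hyperbolic plane of curvature -1, if `a, b, c → ∞` with
`a + b - c → 2s` (`s ≥ 0`) and the angles `θ` are determined by the hyperbolic law of
cosines `cosh c = cosh a cosh b - sinh a sinh b cos θ`, then `cos θ → 1 - 2e^{-2s}`;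
equivalently the limiting angle `θ∞` satisfies `sin(θ∞/2) = e^{-s}`. -/
theorem gromov_product_angle_limit (s : ℝ) (hs : 0 ≤ s)
    (a b c θ : ℕ → ℝ)
    (hθ : ∀ n, θ n ∈ Set.Icc 0 Real.pi)
    (ha : Tendsto a atTop atTop) (hb : Tendsto b atTop atTop)
    (hc : Tendsto c atTop atTop)
    (habc : Tendsto (fun n => a n + b n - c n) atTop (𝓝 (2 * s)))
    (hlaw : ∀ n, Real.cosh (c n) =
      Real.cosh (a n) * Real.cosh (b n) - Real.sinh (a n) * Real.sinh (b n) * Real.cos (θ n)) :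
    Tendsto (fun n => Real.cos (θ n)) atTop (𝓝 (1 - 2 * Real.exp (-(2 * s)))) ∧
    ∀ θinf ∈ Set.Icc 0 Real.pi, Tendsto θ atTop (𝓝 θinf) →
      Real.sin (θinf / 2) = Real.exp (-s) := by
  -- limits of the exponential pieces
  have hA : Tendsto (fun n => Real.exp (-(2 * a n))) atTop (𝓝 0) := by
    apply Real.tendsto_exp_atBot.comp
    exact tendsto_neg_atBot_iff.mpr (ha.const_mul_atTop two_pos)
  have hB : Tendsto (fun n => Real.exp (-(2 * b n))) atTop (𝓝 0) := by
    apply Real.tendsto_exp_atBot.comp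
    exact tendsto_neg_atBot_iff.mpr (hb.const_mul_atTop two_pos)
  have hC : Tendsto (fun n => Real.exp (c n - a n - b n)) atTop (𝓝 (Real.exp (-(2 * s)))) := by
    apply (Real.continuous_exp.tendsto _).comp
    have := habc.neg
    apply this.congr
    intro n; ring
  have hD : Tendsto (fun n => Real.exp (-(c n + a n + b n))) atTop (𝓝 0) := by
    apply Real.tendsto_exp_atBot.comp
    exact tendsto_neg_atBot_iff.mpr (Tendsto.atTop_add_atTop (Tendsto.atTop_add_atTop hc ha) hb)
  have hnum : Tendsto (fun n => (Real.cosh (a n) * Real.cosh (b n) - Real.cosh (c n)) *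
      Real.exp (-(a n + b n))) atTop (𝓝 ((1 - 2 * Real.exp (-(2 * s))) / 4)) := by
    have : Tendsto (fun n =>
        (1 + Real.exp (-(2 * a n)) + Real.exp (-(2 * b n)) +
          Real.exp (-(2 * a n)) * Real.exp (-(2 * b n))) / 4
        - (Real.exp (c n - a n - b n) + Real.exp (-(c n + a n + b n))) / 2) atTop
        (𝓝 ((1 + 0 + 0 + 0 * 0) / 4 - (Real.exp (-(2 * s)) + 0) / 2)) :=
      ((((tendsto_const_nhds.add hA).add hB).add (hA.mul hB)).div_const 4).sub
        ((hC.add hD).div_const 2)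
    have h2 : (1 + 0 + 0 + 0 * 0 : ℝ) / 4 - (Real.exp (-(2 * s)) + 0) / 2
        = (1 - 2 * Real.exp (-(2 * s))) / 4 := by ring
    rw [h2] at this
    exact this.congr fun n => (expand_num (a n) (b n) (c n)).symm
  have hden : Tendsto (fun n => (Real.sinh (a n) * Real.sinh (b n)) *
      Real.exp (-(a n + b n))) atTop (𝓝 ((1:ℝ) / 4)) := by
    have : Tendsto (fun n =>
        (1 - Real.exp (-(2 * a n)) - Real.exp (-(2 * b n)) +
          Real.exp (-(2 * a n)) * Real.exp (-(2 * b n))) / 4) atTop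
        (𝓝 ((1 - 0 - 0 + 0 * 0) / 4)) :=
      (((tendsto_const_nhds.sub hA).sub hB).add (hA.mul hB)).div_const 4
    have h2 : (1 - 0 - 0 + 0 * 0 : ℝ) / 4 = (1:ℝ) / 4 := by ring
    rw [h2] at this
    exact this.congr fun n => (expand_den (a n) (b n)).symm
  have hratio : Tendsto (fun n => ((Real.cosh (a n) * Real.cosh (b n) - Real.cosh (c n)) *
      Real.exp (-(a n + b n))) / ((Real.sinh (a n) * Real.sinh (b n)) *
      Real.exp (-(a n + b n)))) atTop (𝓝 (1 - 2 * Real.exp (-(2 * s)))) := by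
    have := hnum.div hden (by norm_num)
    have h2 : ((1 - 2 * Real.exp (-(2 * s))) / 4) / ((1:ℝ)/4) = 1 - 2 * Real.exp (-(2 * s)) := by
      ring
    rwa [h2] at this
  have hcos : Tendsto (fun n => Real.cos (θ n)) atTop (𝓝 (1 - 2 * Real.exp (-(2 * s)))) := by
    apply hratio.congr'
    filter_upwards [ha.eventually_ge_atTop 1, hb.eventually_ge_atTop 1] with n hA1 hB1
    have hsa : Real.sinh (a n) ≠ 0 := ne_of_gt (Real.sinh_pos_iff.mpr (by linarith))
    have hsb : Real.sinh (b n) ≠ 0 := ne_of_gt (Real.sinh_pos_iff.mpr (by linarith))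
    have hex : Real.exp (-(a n + b n)) ≠ 0 := Real.exp_ne_zero _
    rw [div_eq_iff (by positivity <;> exact mul_ne_zero (mul_ne_zero hsa hsb) hex)]
    · rw [hlaw n]; ring
  refine ⟨hcos, fun θinf hmem hθt => ?_⟩
  have hcos2 : Tendsto (fun n => Real.cos (θ n)) atTop (𝓝 (Real.cos θinf)) :=
    (Real.continuous_cos.tendsto _).comp hθt
  have heq : Real.cos θinf = 1 - 2 * Real.exp (-(2 * s)) := tendsto_nhds_unique hcos2 hcos
  have t1 : Real.cos θinf = 2 * Real.cos (θinf / 2) ^ 2 - 1 := by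
    rw [← Real.cos_two_mul]; congr 1; ring
  have t2 := Real.sin_sq_add_cos_sq (θinf / 2)
  have t3 : Real.exp (-s) ^ 2 = Real.exp (-(2 * s)) := by
    rw [sq, ← Real.exp_add]; congr 1; ring
  have h1 : Real.sin (θinf / 2) ^ 2 = Real.exp (-s) ^ 2 := by
    rw [t3]; linarith
  have h2 : 0 ≤ Real.sin (θinf / 2) :=
    Real.sin_nonneg_of_nonneg_of_le_pi (by linarith [hmem.1])
      (by linarith [hmem.2, Real.pi_pos])
  have h3 : 0 < Real.exp (-s) := Real.exp_pos _
  nlinarith [h1, h2, h3]
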